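/- Let k be an algebraically closed field of characteristic 2, and let α ∈ k be nonzero. The elliptic curve obtained as the smooth plane cubic x^3 + y^2*z + α^{1/8}*(x+z)*(y+z)*z = 0 in P^2 has j-invariant equal to α, where α^{1/8} denotes the (unique) 8th root of α in k. -/

import Mathlib

open MvPolynomial

/-- Let `k` be algebraically closed of characteristic 2 and let `α ∈ k` be nonzero.
The smooth plane cubic `x³ + y²z + α^{1/8}(x+z)(y+z)z = 0` in `ℙ²` (coordinates
`x, y, z` are `X 0, X 1, X 2`; `β` denotes the unique 8th root of `α`) has j-invariant
`α`: there are a Weierstrass curve `W` with nonvanishing discriminant and `j`-invariant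
`α`, an invertible linear change of coordinates `M` of `ℙ²` and a nonzero scalar `c`
transforming the cubic into `c` times the homogeneous Weierstrass polynomial of `W`. -/
theorem j_invariant_cubic_char2 (k : Type*) [Field k] [IsAlgClosed k] [CharP k 2]
    (α : k) (hα : α ≠ 0) (β : k) (hβ : β ^ 8 = α) :
    ∃ (W : WeierstrassCurve k) (hW : W.IsElliptic) (M : Matrix (Fin 3) (Fin 3) k) (c : k),
      IsUnit M.det ∧ c ≠ 0 ∧ W.Δ ≠ 0 ∧ @WeierstrassCurve.j k _ W hW = α ∧
      aeval (fun i => ∑ j, C (M i j) * X j)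
          (X 0 ^ 3 + X 1 ^ 2 * X 2 + C β * (X 0 + X 2) * (X 1 + X 2) * X 2 :
            MvPolynomial (Fin 3) k) =
        C c * WeierstrassCurve.Projective.polynomial W.toProjective := by
  have h2 : (2 : k) = 0 := by exact_mod_cast CharP.cast_eq_zero k 2
  have hβ0 : β ≠ 0 := fun h => hα (by rw [← hβ, h]; ring)
  set W : WeierstrassCurve k := ⟨β, 0, β, β, β⟩ with hWdef
  have hΔ : W.Δ = β ^ 4 := by
    simp only [WeierstrassCurve.Δ, WeierstrassCurve.b₂, WeierstrassCurve.b₄,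
      WeierstrassCurve.b₆, WeierstrassCurve.b₈, hWdef]
    linear_combination (-(β ^ 2 * 216) - β ^ 3 * 140 - β ^ 4 * 49 - β ^ 5 * 3 + β ^ 4 * 23 + β ^ 5 * 6 + β ^ 6) * h2
  have hc4 : W.c₄ = β ^ 4 := by
    simp only [WeierstrassCurve.c₄, WeierstrassCurve.b₂, WeierstrassCurve.b₄, hWdef]
    linear_combination (2 * β ^ 2 - 12 * β - 12 * β - 14 * β ^ 2) * h2
  have hΔ0 : W.Δ ≠ 0 := by rw [hΔ]; exact pow_ne_zero _ hβ0
  have hW : W.IsElliptic := ⟨hΔ0.isUnit⟩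
  refine ⟨W, hW, 1, 1, by simp, one_ne_zero, hΔ0, ?_, ?_⟩
  · rw [WeierstrassCurve.j]
    have hinv : ((W.Δ'⁻¹ : kˣ) : k) = (W.Δ)⁻¹ := by
      rw [← WeierstrassCurve.coe_Δ', ← Units.val_inv_eq_inv_val]
    rw [hinv, hΔ, hc4]
    field_simp
    linear_combination hβ
  · have hC2 : (C (2 : k) : MvPolynomial (Fin 3) k) = 0 := by rw [h2, map_zero]
    simp only [Fin.sum_univ_three, Matrix.one_apply, Fin.ext_iff]
    norm_num
    have h2' : (2 : MvPolynomial (Fin 3) k) = 0 := by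
      exact_mod_cast CharP.cast_eq_zero (MvPolynomial (Fin 3) k) 2
    simp only [map_add, map_mul, map_pow, aeval_X, aeval_C, C_0,
      WeierstrassCurve.Projective.polynomial, hWdef, map_one, one_mul]
    simp only [show ((2 : Fin 3) = 0) ↔ False by decide, if_false]
    linear_combination (X 0 * X 2 ^ 2 * C β + X 0 ^ 3 + X 2 ^ 3 * C β) * h2'
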